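/- There is no pair (θ, P) where 0 < θ < 1 is real and P is a finite collection of polynomials of the form R_{p,q,c}(ζ) = c·ζ^p − r·ζ^q + (r−1) (with fixed coprime p > q ≥ 1, r = p/q, and varying c ≠ 0) such that the set M = {θ} ∪ {ζ^q : ζ a root of some polynomial in P} ⊂ ℂ∖{0} is invariant under the map z ↦ 1/z. -/

import Mathlib

open Real Set

/-- `g w = q·log(r w − r + 1) − p·log w` is strictly increasing left of 1. -/
lemma aux_g_mono (p q : ℕ) (hq : 0 < q) (hpq : q < p) :
    StrictMonoOn (fun w : ℝ => q * Real.log ((p:ℝ)/q * w - (p:ℝ)/q + 1) - p * Real.log w)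
      (Set.Ioc (1 - (q:ℝ)/p) 1) := by
  have hp0 : (0:ℝ) < p := by exact_mod_cast lt_trans hq hpq
  have hq0 : (0:ℝ) < q := by exact_mod_cast hq
  have hr1 : 1 < (p:ℝ)/q := (one_lt_div hq0).2 (by exact_mod_cast hpq)
  have ht0 : (0:ℝ) < 1 - (q:ℝ)/p := by
    have : (q:ℝ)/p < 1 := (div_lt_one hp0).2 (by exact_mod_cast hpq)
    linarith
  -- positivity of the log arguments on the domain
  have hLpos : ∀ x : ℝ, 1 - (q:ℝ)/p < x → 0 < (p:ℝ)/q * x - (p:ℝ)/q + 1 := by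
    intro x hx
    have : (p:ℝ)/q * (1 - (q:ℝ)/p) - (p:ℝ)/q + 1 = 0 := by field_simp; ring
    nlinarith
  apply strictMonoOn_of_deriv_pos (convex_Ioc _ _)
  · apply ContinuousOn.sub
    · apply ContinuousOn.mul continuousOn_const
      apply ContinuousOn.log (by fun_prop)
      intro x hx
      exact ne_of_gt (hLpos x hx.1)
    · apply ContinuousOn.mul continuousOn_const
      apply ContinuousOn.log (by fun_prop)
      intro x hx
      exact ne_of_gt (lt_trans ht0 hx.1)
  · intro x hx
    rw [interior_Ioc] at hx
    obtain ⟨hx1, hx2⟩ := hx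
    have hx0 : 0 < x := lt_trans ht0 hx1
    have hL : 0 < (p:ℝ)/q * x - (p:ℝ)/q + 1 := hLpos x hx1
    have h1 : HasDerivAt (fun w : ℝ => (p:ℝ)/q * w - (p:ℝ)/q + 1) ((p:ℝ)/q) x := by
      simpa using (((hasDerivAt_id x).const_mul ((p:ℝ)/q)).sub_const ((p:ℝ)/q)).add_const 1
    have h2 := h1.log (ne_of_gt hL)
    have h3 := Real.hasDerivAt_log (ne_of_gt hx0)
    have H := (h2.const_mul (q:ℝ)).sub (h3.const_mul (p:ℝ))
    erw [H.deriv]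
    have e1 : (q:ℝ) * ((p:ℝ)/q / ((p:ℝ)/q * x - (p:ℝ)/q + 1)) = (p:ℝ) / ((p:ℝ)/q * x - (p:ℝ)/q + 1) := by
      field_simp
    rw [e1]
    have hLx : (p:ℝ)/q * x - (p:ℝ)/q + 1 < x := by nlinarith
    have := div_lt_div_of_pos_left hp0 hL hLx
    have hpx : (p:ℝ) * x⁻¹ = (p:ℝ)/x := by rw [div_eq_mul_inv]
    linarith [hpx ▸ this]

/-- `g` is strictly decreasing right of 1. -/
lemma aux_g_anti (p q : ℕ) (hq : 0 < q) (hpq : q < p) :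
    StrictAntiOn (fun w : ℝ => q * Real.log ((p:ℝ)/q * w - (p:ℝ)/q + 1) - p * Real.log w)
      (Set.Ici 1) := by
  have hp0 : (0:ℝ) < p := by exact_mod_cast lt_trans hq hpq
  have hq0 : (0:ℝ) < q := by exact_mod_cast hq
  have hr1 : 1 < (p:ℝ)/q := (one_lt_div hq0).2 (by exact_mod_cast hpq)
  have hLpos : ∀ x : ℝ, 1 ≤ x → 0 < (p:ℝ)/q * x - (p:ℝ)/q + 1 := by
    intro x hx; nlinarith
  apply strictAntiOn_of_deriv_neg (convex_Ici _)
  · apply ContinuousOn.sub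
    · apply ContinuousOn.mul continuousOn_const
      apply ContinuousOn.log (by fun_prop)
      intro x hx
      exact ne_of_gt (hLpos x hx)
    · apply ContinuousOn.mul continuousOn_const
      apply ContinuousOn.log (by fun_prop)
      intro x hx
      exact ne_of_gt (lt_of_lt_of_le one_pos hx)
  · intro x hx
    rw [interior_Ici] at hx
    have hx1 : (1:ℝ) < x := hx
    have hx0 : 0 < x := lt_trans one_pos hx1
    have hL : 0 < (p:ℝ)/q * x - (p:ℝ)/q + 1 := hLpos x hx1.le
    have h1 : HasDerivAt (fun w : ℝ => (p:ℝ)/q * w - (p:ℝ)/q + 1) ((p:ℝ)/q) x := by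
      simpa using (((hasDerivAt_id x).const_mul ((p:ℝ)/q)).sub_const ((p:ℝ)/q)).add_const 1
    have h2 := h1.log (ne_of_gt hL)
    have h3 := Real.hasDerivAt_log (ne_of_gt hx0)
    have H := (h2.const_mul (q:ℝ)).sub (h3.const_mul (p:ℝ))
    erw [H.deriv]
    have e1 : (q:ℝ) * ((p:ℝ)/q / ((p:ℝ)/q * x - (p:ℝ)/q + 1)) = (p:ℝ) / ((p:ℝ)/q * x - (p:ℝ)/q + 1) := by
      field_simp
    rw [e1]
    have hLx : x < (p:ℝ)/q * x - (p:ℝ)/q + 1 := by nlinarith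
    have := div_lt_div_of_pos_left hp0 hx0 hLx
    have hpx : (p:ℝ) * x⁻¹ = (p:ℝ)/x := by rw [div_eq_mul_inv]
    linarith [hpx ▸ this]

/-- IVT: existence of the small root `φ`. -/
lemma aux_exists_phi (p q : ℕ) (hq : 0 < q) (hpq : q < p) (k : ℝ) (hk0 : 0 < k) (hk1 : k < 1) :
    ∃ φ ∈ Set.Ioo (1 - (q:ℝ)/p) 1, ((p:ℝ)/q * φ - (p:ℝ)/q + 1)^q = k * φ^p := by
  have hp0 : (0:ℝ) < p := by exact_mod_cast lt_trans hq hpq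
  have hq0 : (0:ℝ) < q := by exact_mod_cast hq
  have ht0 : (0:ℝ) < 1 - (q:ℝ)/p := by
    have : (q:ℝ)/p < 1 := (div_lt_one hp0).2 (by exact_mod_cast hpq)
    linarith
  have ht1 : (1 - (q:ℝ)/p) ≤ 1 := by
    have : 0 ≤ (q:ℝ)/p := by positivity
    linarith
  set f : ℝ → ℝ := fun w => ((p:ℝ)/q * w - (p:ℝ)/q + 1)^q - k * w^p with hf
  have hcont : ContinuousOn f (Set.Icc (1 - (q:ℝ)/p) 1) := by fun_prop
  have hfa : f (1 - (q:ℝ)/p) < 0 := by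
    have h0 : (p:ℝ)/q * (1 - (q:ℝ)/p) - (p:ℝ)/q + 1 = 0 := by field_simp; ring
    have : f (1 - (q:ℝ)/p) = -(k * (1 - (q:ℝ)/p)^p) := by
      simp [hf, h0, zero_pow hq.ne']
    rw [this]
    have : 0 < (1 - (q:ℝ)/p)^p := by positivity
    nlinarith
  have hfb : 0 < f 1 := by
    have : f 1 = 1 - k := by simp [hf]
    rw [this]; linarith
  have := intermediate_value_Ioo ht1 hcont
  have h0mem : (0:ℝ) ∈ Set.Ioo (f (1 - (q:ℝ)/p)) (f 1) := ⟨hfa, hfb⟩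
  obtain ⟨φ, hφmem, hφ⟩ := this h0mem
  exact ⟨φ, hφmem, by simp [hf] at hφ; linarith [hφ]⟩

/-- Key inequality: `g(1/μ) < g(μ)` for `1 < μ < p/(p−q)`. -/
lemma aux_phi_ineq (p q : ℕ) (hq : 0 < q) (hpq : q < p) (μ : ℝ) (h1 : 1 < μ)
    (h2 : μ < (p:ℝ)/((p:ℝ) - q)) :
    (q:ℝ) * Real.log ((p:ℝ)/q * μ⁻¹ - (p:ℝ)/q + 1) - p * Real.log μ⁻¹ <
    (q:ℝ) * Real.log ((p:ℝ)/q * μ - (p:ℝ)/q + 1) - p * Real.log μ := by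
  have hp0 : (0:ℝ) < p := by exact_mod_cast lt_trans hq hpq
  have hq0 : (0:ℝ) < q := by exact_mod_cast hq
  have hpq' : (q:ℝ) < p := by exact_mod_cast hpq
  set c : ℝ := (p:ℝ)/((p:ℝ) - q) with hc
  have hc1 : 1 < c := by
    rw [hc, lt_div_iff₀ (by linarith)]; linarith
  set Φ : ℝ → ℝ := fun w =>
    ((q:ℝ) * Real.log ((p:ℝ)/q * w - (p:ℝ)/q + 1) - p * Real.log w) -
    ((q:ℝ) * Real.log ((p:ℝ)/q * w⁻¹ - (p:ℝ)/q + 1) - p * Real.log w⁻¹) with hΦ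
  -- positivity of inner expressions on [1, c)
  have hN : ∀ x : ℝ, 1 ≤ x → x < c → 0 < (p:ℝ)/q * x⁻¹ - (p:ℝ)/q + 1 := by
    intro x hx1 hx2
    have hx0 : 0 < x := lt_of_lt_of_le one_pos hx1
    have hxc : x * ((p:ℝ) - q) < p := by
      rw [hc, lt_div_iff₀ (by linarith)] at hx2; linarith
    rw [show (p:ℝ)/q * x⁻¹ - (p:ℝ)/q + 1 = ((p:ℝ) - ((p:ℝ) - q) * x) / (q * x) by
      field_simp; ring]
    apply div_pos (by nlinarith) (by positivity)
  have hL : ∀ x : ℝ, 1 ≤ x → 0 < (p:ℝ)/q * x - (p:ℝ)/q + 1 := by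
    intro x hx; nlinarith [(div_pos hp0 hq0)]
  have hmono : StrictMonoOn Φ (Set.Ico 1 c) := by
    apply strictMonoOn_of_deriv_pos (convex_Ico _ _)
    · apply ContinuousOn.sub
      · apply ContinuousOn.sub
        · exact ContinuousOn.mul continuousOn_const
            (ContinuousOn.log (by fun_prop) (fun x hx => ne_of_gt (hL x hx.1)))
        · exact ContinuousOn.mul continuousOn_const
            (ContinuousOn.log (by fun_prop) (fun x hx => ne_of_gt (lt_of_lt_of_le one_pos hx.1)))
      · apply ContinuousOn.sub
        · apply ContinuousOn.mul continuousOn_const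
          apply ContinuousOn.log
          · apply ContinuousOn.add (ContinuousOn.sub ?_ continuousOn_const) continuousOn_const
            exact ContinuousOn.mul continuousOn_const
              (ContinuousOn.inv₀ continuousOn_id (fun x hx => ne_of_gt (lt_of_lt_of_le one_pos hx.1)))
          · exact fun x hx => ne_of_gt (hN x hx.1 hx.2)
        · apply ContinuousOn.mul continuousOn_const
          apply ContinuousOn.log
          · exact ContinuousOn.inv₀ continuousOn_id (fun x hx => ne_of_gt (lt_of_lt_of_le one_pos hx.1))
          · intro x hx
            exact ne_of_gt (inv_pos.2 (lt_of_lt_of_le one_pos hx.1))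
    · intro x hx
      rw [interior_Ico] at hx
      obtain ⟨hx1, hx2⟩ := hx
      have hx0 : 0 < x := lt_trans one_pos hx1
      have hLx : 0 < (p:ℝ)/q * x - (p:ℝ)/q + 1 := hL x hx1.le
      have hNx : 0 < (p:ℝ)/q * x⁻¹ - (p:ℝ)/q + 1 := hN x hx1.le hx2
      have h1' : HasDerivAt (fun w : ℝ => (p:ℝ)/q * w - (p:ℝ)/q + 1) ((p:ℝ)/q) x := by
        simpa using (((hasDerivAt_id x).const_mul ((p:ℝ)/q)).sub_const ((p:ℝ)/q)).add_const 1
      have h2' : HasDerivAt (fun w : ℝ => (p:ℝ)/q * w⁻¹ - (p:ℝ)/q + 1) ((p:ℝ)/q * (-(x^2)⁻¹)) x := by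
        simpa using (((hasDerivAt_inv (ne_of_gt hx0)).const_mul ((p:ℝ)/q)).sub_const ((p:ℝ)/q)).add_const 1
      have hinv' : HasDerivAt (fun w : ℝ => w⁻¹) (-(x^2)⁻¹) x := hasDerivAt_inv (ne_of_gt hx0)
      have hlog1 := h1'.log (ne_of_gt hLx)
      have hlog2 := h2'.log (ne_of_gt hNx)
      have hlog3 := Real.hasDerivAt_log (ne_of_gt hx0)
      have hlog4 := hinv'.log (ne_of_gt (inv_pos.2 hx0))
      have H := ((hlog1.const_mul (q:ℝ)).sub (hlog3.const_mul (p:ℝ))).sub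
        ((hlog2.const_mul (q:ℝ)).sub (hlog4.const_mul (p:ℝ)))
      erw [H.deriv]
      have hxc : ((p:ℝ) - q) * x < p := by
        rw [hc, lt_div_iff₀ (by linarith)] at hx2; nlinarith
      have hden1 : (0:ℝ) < (p:ℝ) * x - p + q := by nlinarith
      have hNum : (0:ℝ) < (p:ℝ) - ((p:ℝ) - q) * x := by nlinarith
      have hrw1 : (p:ℝ)/q * x - (p:ℝ)/q + 1 = ((p:ℝ) * x - p + q) / q := by
        field_simp
      have hrw2 : (p:ℝ)/q * x⁻¹ - (p:ℝ)/q + 1 = ((p:ℝ) - ((p:ℝ) - q) * x) / (q * x) := by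
        field_simp; ring
      have e : (q:ℝ) * ((p:ℝ)/q / ((p:ℝ)/q * x - (p:ℝ)/q + 1)) - (p:ℝ) * x⁻¹ -
          ((q:ℝ) * ((p:ℝ)/q * (-(x^2)⁻¹) / ((p:ℝ)/q * x⁻¹ - (p:ℝ)/q + 1)) - (p:ℝ) * (-(x^2)⁻¹ / x⁻¹)) =
          ((p:ℝ) * ((p:ℝ) - q) * (2*(p:ℝ) - q) * (x - 1)^2) /
            (x * ((p:ℝ) * x - p + q) * ((p:ℝ) - ((p:ℝ) - q) * x)) := by
        rw [hrw1, hrw2]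
        obtain ⟨D, hD⟩ : ∃ D : ℝ, D = (p:ℝ) - ((p:ℝ) - q) * x := ⟨_, rfl⟩
        have hD0 : D ≠ 0 := hD ▸ hNum.ne'
        rw [← hD]
        field_simp
        rw [hD]
        ring
      rw [e]
      apply div_pos
      · have hsq : 0 < (x - 1)^2 := pow_pos (by linarith) 2
        have h2p : 0 < 2*(p:ℝ) - q := by linarith
        have hpmq : 0 < (p:ℝ) - q := by linarith
        exact mul_pos (mul_pos (mul_pos hp0 hpmq) h2p) hsq
      · exact mul_pos (mul_pos hx0 hden1) hNum
  have hΦ1 : Φ 1 = 0 := by simp [hΦ]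
  have := hmono (by constructor <;> [exact le_refl 1; exact lt_trans h1 h2]) ⟨h1.le, h2⟩ h1
  rw [hΦ1] at this
  simp only [hΦ] at this
  linarith

/-- There is no pair `(θ, P)` with `θ ∈ (0,1)` real and `P` a finite collection
of polynomials `R_{p,q,c}(ζ) = c·ζ^p − r·ζ^q + (r−1)` (fixed coprime `p > q ≥ 1`, `r = p/q`,
varying `c ≠ 0`) such that the set `M = {θ} ∪ {ζ^q : ζ root of some polynomial in P}` is
invariant under `z ↦ 1/z`. -/
theorem no_inverse_invariant_set (p q : ℕ) (hq : 0 < q) (hpq : q < p)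
    (hcop : Nat.Coprime p q) (θ : ℝ) (hθ0 : 0 < θ) (hθ1 : θ < 1)
    (cs : Finset ℂ) (hcs : ∀ c ∈ cs, c ≠ 0) (M : Set ℂ)
    (hM : M = {((θ : ℂ))} ∪ {w | ∃ c ∈ cs, ∃ ζ : ℂ,
        c * ζ ^ p - ((p : ℂ) / q) * ζ ^ q + ((p : ℂ) / q - 1) = 0 ∧ w = ζ ^ q})
    (hinv : ∀ z : ℂ, z ∈ M ↔ z⁻¹ ∈ M) :
    False := by
  have hp : 0 < p := lt_trans hq hpq
  have hp0 : (0:ℝ) < p := by exact_mod_cast hp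
  have hq0 : (0:ℝ) < q := by exact_mod_cast hq
  have hpq' : (q:ℝ) < p := by exact_mod_cast hpq
  have hrr : (0:ℝ) < (p:ℝ)/q := div_pos hp0 hq0
  have hr1 : 1 < (p:ℝ)/q := (one_lt_div hq0).2 hpq'
  have ht0 : (0:ℝ) < 1 - (q:ℝ)/p := by
    have : (q:ℝ)/p < 1 := (div_lt_one hp0).2 hpq'
    linarith
  -- M is finite
  have hMfin : M.Finite := by
    rw [hM]
    refine (Set.finite_singleton _).union ?_
    have hset : {w : ℂ | ∃ c ∈ cs, ∃ ζ : ℂ,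
        c * ζ ^ p - ((p : ℂ) / q) * ζ ^ q + ((p : ℂ) / q - 1) = 0 ∧ w = ζ ^ q}
        = ⋃ c ∈ cs, (fun ζ : ℂ => ζ ^ q) ''
          {ζ : ℂ | c * ζ ^ p - ((p : ℂ) / q) * ζ ^ q + ((p : ℂ) / q - 1) = 0} := by
      ext w
      simp only [Set.mem_setOf_eq, Set.mem_iUnion, Set.mem_image]
      constructor
      · rintro ⟨c, hc, ζ, h1, h2⟩; exact ⟨c, hc, ζ, h1, h2.symm⟩
      · rintro ⟨c, hc, ζ, h1, h2⟩; exact ⟨c, hc, ζ, h1, h2.symm⟩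
    rw [hset]
    refine Set.Finite.biUnion cs.finite_toSet (fun c hc => Set.Finite.image _ ?_)
    have hpoly : {ζ : ℂ | c * ζ ^ p - ((p : ℂ) / q) * ζ ^ q + ((p : ℂ) / q - 1) = 0}
        = {ζ : ℂ | (Polynomial.C c * Polynomial.X ^ p - Polynomial.C ((p : ℂ) / q) * Polynomial.X ^ q
            + Polynomial.C ((p : ℂ) / q - 1)).IsRoot ζ} := by
      ext ζ; simp [Polynomial.IsRoot]
    rw [hpoly]
    apply Polynomial.finite_setOf_isRoot
    intro hzero
    have hcoeff := congrArg (fun f => Polynomial.coeff f p) hzero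
    simp [Polynomial.coeff_X_pow, Polynomial.coeff_one, Polynomial.coeff_C, (Nat.ne_of_lt hpq).symm, hp.ne'] at hcoeff
    exact hcs c hc hcoeff
  -- the set of real elements of M greater than 1
  set S : Set ℝ := {x : ℝ | (x:ℂ) ∈ M ∧ 1 < x} with hS
  have hSfin : S.Finite := by
    have h1 : S ⊆ (fun x : ℝ => (x:ℂ)) ⁻¹' M := fun x hx => hx.1
    exact Set.Finite.subset (Set.Finite.preimage Complex.ofReal_injective.injOn hMfin) h1
  have hθM : ((θ:ℝ):ℂ) ∈ M := by rw [hM]; exact Set.mem_union_left _ rfl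
  have hθS : θ⁻¹ ∈ S := by
    refine ⟨?_, (one_lt_inv₀ hθ0).2 hθ1⟩
    rw [Complex.ofReal_inv]; exact (hinv _).1 hθM
  have hne : hSfin.toFinset.Nonempty := ⟨θ⁻¹, hSfin.mem_toFinset.2 hθS⟩
  set μ := hSfin.toFinset.min' hne with hμdef
  have hμS : μ ∈ S := hSfin.mem_toFinset.1 (hSfin.toFinset.min'_mem hne)
  have hμmin : ∀ x ∈ S, μ ≤ x := fun x hx => hSfin.toFinset.min'_le x (hSfin.mem_toFinset.2 hx)
  obtain ⟨hμM, hμ1⟩ := hμS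
  have hμpos : (0:ℝ) < μ := lt_trans one_pos hμ1
  -- μ is the q-th power of a root
  rw [hM] at hμM
  rcases hμM with h | h
  · rw [Set.mem_singleton_iff] at h
    have : μ = θ := Complex.ofReal_inj.1 h
    linarith
  obtain ⟨c, hc, ζ, hζ, hw⟩ := h
  have hc0 : c ≠ 0 := hcs c hc
  -- the real quantities
  have hLμpos : (1:ℝ) < (p:ℝ)/q * μ - (p:ℝ)/q + 1 := by nlinarith
  have hrootμ : c * ζ ^ p = (((p:ℝ)/q * μ - (p:ℝ)/q + 1 : ℝ) : ℂ) := by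
    push_cast
    rw [hw]
    linear_combination hζ
  have hc2 : c ^ q * ((μ:ℝ):ℂ) ^ p = (((p:ℝ)/q * μ - (p:ℝ)/q + 1 : ℝ):ℂ) ^ q := by
    calc c ^ q * ((μ:ℝ):ℂ) ^ p = c ^ q * (ζ ^ p) ^ q := by
          rw [hw, ← pow_mul, ← pow_mul]; ring
      _ = (c * ζ ^ p) ^ q := (mul_pow _ _ _).symm
      _ = _ := by rw [hrootμ]
  set k : ℝ := ((p:ℝ)/q * μ - (p:ℝ)/q + 1) ^ q / μ ^ p with hkdef
  have hk0 : 0 < k := div_pos (pow_pos (by linarith) q) (pow_pos hμpos p)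
  have hlogk : Real.log k = q * Real.log ((p:ℝ)/q * μ - (p:ℝ)/q + 1) - p * Real.log μ := by
    rw [hkdef, Real.log_div (pow_ne_zero _ (by linarith)) (pow_ne_zero _ hμpos.ne'),
      Real.log_pow, Real.log_pow]
  have hk1 : k < 1 := by
    have hg := aux_g_anti p q hq hpq (Set.mem_Ici.2 le_rfl) (Set.mem_Ici.2 hμ1.le) hμ1
    simp only at hg
    have hg1 : (q:ℝ) * Real.log ((p:ℝ)/q * 1 - (p:ℝ)/q + 1) - p * Real.log 1 = 0 := by
      norm_num
    refine (Real.log_neg_iff hk0).1 ?_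
    rw [hlogk]; linarith
  -- get φ
  obtain ⟨φ, hφIoo, heqφ⟩ := aux_exists_phi p q hq hpq k hk0 hk1
  have hφpos : (0:ℝ) < φ := lt_trans ht0 hφIoo.1
  have hLφpos : (0:ℝ) < (p:ℝ)/q * φ - (p:ℝ)/q + 1 := by
    have hzero : (p:ℝ)/q * (1 - (q:ℝ)/p) - (p:ℝ)/q + 1 = 0 := by field_simp; ring
    nlinarith [mul_pos hrr (sub_pos.2 hφIoo.1)]
  -- complex equation for φ
  have hμpne : ((μ:ℝ):ℂ) ^ p ≠ 0 := pow_ne_zero _ (by exact_mod_cast hμpos.ne')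
  have hck : c ^ q = ((k:ℝ):ℂ) := by
    have hkc : ((k:ℝ):ℂ) = (((p:ℝ)/q * μ - (p:ℝ)/q + 1 : ℝ):ℂ) ^ q / ((μ:ℝ):ℂ) ^ p := by
      rw [hkdef]; push_cast; ring
    rw [hkc, eq_div_iff hμpne]
    exact hc2
  have heqφC : ((k:ℝ):ℂ) * ((φ:ℝ):ℂ) ^ p = (((p:ℝ)/q * φ - (p:ℝ)/q + 1 : ℝ):ℂ) ^ q := by
    exact_mod_cast congrArg Complex.ofReal heqφ.symm
  have hφ0C : ((φ:ℝ):ℂ) ≠ 0 := by exact_mod_cast hφpos.ne'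
  have hLφ0C : (((p:ℝ)/q * φ - (p:ℝ)/q + 1 : ℝ):ℂ) ≠ 0 := by exact_mod_cast hLφpos.ne'
  set A : ℂ := (((p:ℝ)/q * φ - (p:ℝ)/q + 1 : ℝ):ℂ) / c with hA
  have hA0 : A ≠ 0 := div_ne_zero hLφ0C hc0
  have hAq : A ^ q = ((φ:ℝ):ℂ) ^ p := by
    rw [hA, div_pow, div_eq_iff (pow_ne_zero _ hc0)]
    rw [← heqφC, ← hck]; ring
  -- Bezout
  have hcopZ : IsCoprime (p:ℤ) (q:ℤ) := by
    rw [Int.isCoprime_iff_gcd_eq_one, Int.gcd_natCast_natCast]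
    exact hcop
  obtain ⟨u, v, huv⟩ := hcopZ
  -- construct the root ζ' with ζ'^q = φ
  set aU : ℂˣ := Units.mk0 A hA0 with haU
  set fU : ℂˣ := Units.mk0 _ hφ0C with hfU
  have hAqU : aU ^ q = fU ^ p := Units.ext (by simpa [haU, hfU] using hAq)
  set ζ' : ℂˣ := aU ^ u * fU ^ v with hζ'
  have hζ'q : ζ' ^ (q:ℤ) = fU := by
    calc ζ' ^ (q:ℤ) = (aU ^ u * fU ^ v) ^ (q:ℤ) := rfl
      _ = aU ^ (u * (q:ℤ)) * fU ^ (v * (q:ℤ)) := by rw [mul_zpow, ← zpow_mul, ← zpow_mul]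
      _ = (aU ^ (q:ℤ)) ^ u * fU ^ (v * (q:ℤ)) := by rw [mul_comm u, zpow_mul]
      _ = (fU ^ (p:ℤ)) ^ u * fU ^ (v * (q:ℤ)) := by rw [zpow_natCast, hAqU, zpow_natCast]
      _ = fU ^ ((p:ℤ) * u + v * (q:ℤ)) := by rw [← zpow_mul, ← zpow_add]
      _ = fU ^ (1:ℤ) := by rw [show (p:ℤ) * u + v * (q:ℤ) = u * p + v * q by ring, huv]
      _ = fU := zpow_one _
  have hζ'p : ζ' ^ (p:ℤ) = aU := by
    calc ζ' ^ (p:ℤ) = (aU ^ u * fU ^ v) ^ (p:ℤ) := rfl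
      _ = aU ^ (u * (p:ℤ)) * fU ^ (v * (p:ℤ)) := by rw [mul_zpow, ← zpow_mul, ← zpow_mul]
      _ = aU ^ (u * (p:ℤ)) * (fU ^ (p:ℤ)) ^ v := by rw [mul_comm v ((p:ℤ)), zpow_mul fU ((p:ℤ)) v]
      _ = aU ^ (u * (p:ℤ)) * (aU ^ (q:ℤ)) ^ v := by rw [zpow_natCast, ← hAqU, zpow_natCast]
      _ = aU ^ (u * (p:ℤ) + (q:ℤ) * v) := by rw [← zpow_mul, ← zpow_add]
      _ = aU ^ (1:ℤ) := by rw [show u * (p:ℤ) + (q:ℤ) * v = u * p + v * q by ring, huv]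
      _ = aU := zpow_one _
  have hz_q : ((ζ' : ℂ)) ^ q = ((φ:ℝ):ℂ) := by
    have := congrArg (Units.val) hζ'q
    rw [zpow_natCast] at this
    simpa [hfU] using this
  have hz_p : ((ζ' : ℂ)) ^ p = A := by
    have := congrArg (Units.val) hζ'p
    rw [zpow_natCast] at this
    simpa [haU] using this
  have hroot : c * ((ζ' : ℂ)) ^ p - ((p : ℂ) / q) * ((ζ' : ℂ)) ^ q + ((p : ℂ) / q - 1) = 0 := by
    rw [hz_p, hz_q, hA, mul_div_cancel₀ _ hc0]
    push_cast
    ring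
  -- φ ∈ M and hence φ⁻¹ ∈ S
  have hφM : ((φ:ℝ):ℂ) ∈ M := by
    rw [hM]
    exact Set.mem_union_right _ ⟨c, hc, (ζ' : ℂ), hroot, hz_q.symm⟩
  have hφinvS : φ⁻¹ ∈ S := by
    refine ⟨?_, (one_lt_inv₀ hφpos).2 hφIoo.2⟩
    rw [Complex.ofReal_inv]; exact (hinv _).1 hφM
  -- the log of k equals g(φ)
  have hgφ : (q:ℝ) * Real.log ((p:ℝ)/q * φ - (p:ℝ)/q + 1) - p * Real.log φ = Real.log k := by
    have := congrArg Real.log heqφ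
    rw [Real.log_pow, Real.log_mul hk0.ne' (pow_ne_zero _ hφpos.ne'), Real.log_pow] at this
    linarith
  -- key comparison : μ⁻¹ < φ
  have hμinvφ : μ⁻¹ < φ := by
    rcases le_or_gt μ⁻¹ (1 - (q:ℝ)/p) with hcase | hcase
    · exact lt_of_le_of_lt hcase hφIoo.1
    · have hμc : μ < (p:ℝ)/((p:ℝ) - q) := by
        rw [lt_div_iff₀ (by linarith)]
        have h1 : (1 - (q:ℝ)/p) * μ < 1 := by
          calc (1 - (q:ℝ)/p) * μ < μ⁻¹ * μ := mul_lt_mul_of_pos_right hcase hμpos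
            _ = 1 := inv_mul_cancel₀ hμpos.ne'
        have h2 : (1 - (q:ℝ)/p) * μ = μ * ((p:ℝ) - q) / p := by field_simp
        rw [h2] at h1
        calc μ * ((p:ℝ) - q) = μ * ((p:ℝ) - q) / p * p := by field_simp
          _ < 1 * p := by exact mul_lt_mul_of_pos_right h1 hp0
          _ = p := one_mul _
      have hkey := aux_phi_ineq p q hq hpq μ hμ1 hμc
      by_contra hle
      push_neg at hle
      have hμinvIoc : μ⁻¹ ∈ Set.Ioc (1 - (q:ℝ)/p) 1 :=
        ⟨hcase, le_of_lt (inv_lt_one_of_one_lt₀ hμ1)⟩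
      have hφIoc : φ ∈ Set.Ioc (1 - (q:ℝ)/p) 1 := ⟨hφIoo.1, hφIoo.2.le⟩
      rcases eq_or_lt_of_le hle with heq | hlt
      · rw [← heq] at hkey
        linarith [hgφ, hlogk, hkey]
      · have hmono := aux_g_mono p q hq hpq hφIoc hμinvIoc hlt
        linarith [hgφ, hlogk, hkey, hmono]
  have hfinal : φ⁻¹ < μ := by
    rw [← inv_inv μ]
    exact inv_strictAnti₀ (inv_pos.2 hμpos) hμinvφ
  have := hμmin φ⁻¹ hφinvS
  linarith
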